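/- Along solutions of the system Ψ' = 2(2K−1)cos(Ψ), K' = 2K(K−1)sin(Ψ) with initial data Ψ(0) = 0, K(0) = γ for 0 < γ < 1/2, the value K(t) stays in the open interval (0, 1) for all time where the solution exists: indeed the conserved quantity H⋆ = 2K(1−K)cos(Ψ) equals 2γ(1−γ) > 0, and 2K(1−K) ≥ 2K(1−K)cos(Ψ) = 2γ(1−γ) implies γ ≤ K(t) ≤ 1 − γ. -/

import Mathlib

/-- Along solutions of `Ψ' = 2(2K−1)cos Ψ`, `K' = 2K(K−1)sin Ψ` with
`Ψ(0) = 0`, `K(0) = γ`, `0 < γ < 1/2`, one has `γ ≤ K(t) ≤ 1 − γ` for all `t`;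
in particular `K(t)` stays in the open interval `(0,1)`. -/
theorem stmt_15 (γ : ℝ) (hγ0 : 0 < γ) (hγ : γ < 1 / 2) (Ψ K : ℝ → ℝ)
    (hΨ : ∀ t : ℝ, HasDerivAt Ψ (2 * (2 * K t - 1) * Real.cos (Ψ t)) t)
    (hK : ∀ t : ℝ, HasDerivAt K (2 * K t * (K t - 1) * Real.sin (Ψ t)) t)
    (hΨ0 : Ψ 0 = 0) (hK0 : K 0 = γ) :
    ∀ t : ℝ, γ ≤ K t ∧ K t ≤ 1 - γ ∧ 0 < K t ∧ K t < 1 := by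
  set H : ℝ → ℝ := fun t => 2 * K t * (1 - K t) * Real.cos (Ψ t) with hHdef
  have hH : ∀ t, HasDerivAt H 0 t := by
    intro t
    have hcos : HasDerivAt (fun s => Real.cos (Ψ s))
        (-Real.sin (Ψ t) * (2 * (2 * K t - 1) * Real.cos (Ψ t))) t :=
      (Real.hasDerivAt_cos (Ψ t)).comp t (hΨ t)
    have h1 : HasDerivAt (fun s => 2 * K s * (1 - K s))
        ((2 * (2 * K t * (K t - 1) * Real.sin (Ψ t))) * (1 - K t)
          + (2 * K t) * (-(2 * K t * (K t - 1) * Real.sin (Ψ t)))) t := by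
      exact (((hK t).const_mul 2).mul ((hK t).const_sub 1))
    have h2 := h1.mul hcos
    convert h2 using 1
    · rfl
    · rfl
    · rfl
    ring
  have hconst : ∀ t, H t = 2 * γ * (1 - γ) := by
    intro t
    have : H t = H 0 := by
      have := is_const_of_deriv_eq_zero (f := H)
        (fun s => (hH s).differentiableAt) (fun s => (hH s).deriv) t 0
      exact this
    rw [this]; simp [hHdef, hK0, hΨ0]
  have hγγ : 0 < γ * (1 - γ) := by nlinarith
  -- |K(1-K)| ≥ γ(1-γ)
  have habs : ∀ t, γ * (1 - γ) ≤ |K t * (1 - K t)| := by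
    intro t
    have h := hconst t
    have hHabs : |H t| = 2 * γ * (1 - γ) := by
      rw [h]; exact abs_of_pos (by nlinarith)
    have e : H t = 2 * (K t * (1 - K t)) * Real.cos (Ψ t) := by
      rw [hHdef]; ring
    have hle : |H t| ≤ 2 * |K t * (1 - K t)| := by
      rw [e, abs_mul, abs_mul, abs_two]
      nlinarith [abs_nonneg (K t * (1 - K t)), Real.abs_cos_le_one (Ψ t)]
    linarith [hle, hHabs.ge, hHabs.le]
  -- by IVT, K(1-K) ≥ γ(1-γ) everywhere
  have hcont : Continuous fun t => K t * (1 - K t) := by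
    have : Differentiable ℝ K := fun t => (hK t).differentiableAt
    exact (this.continuous).mul (continuous_const.sub this.continuous)
  have hpos : ∀ t, γ * (1 - γ) ≤ K t * (1 - K t) := by
    intro t
    by_contra hlt
    push_neg at hlt
    have hneg : K t * (1 - K t) ≤ -(γ * (1 - γ)) := by
      have := habs t
      rcases abs_cases (K t * (1 - K t)) with ⟨h1, _⟩ | ⟨h1, _⟩ <;> nlinarith
    have h0 : γ * (1 - γ) ≤ K 0 * (1 - K 0) := by rw [hK0]
    have : (0:ℝ) ∈ Set.uIcc (K t * (1 - K t)) (K 0 * (1 - K 0)) := by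
      rw [Set.mem_uIcc]
      left
      constructor <;> nlinarith
    obtain ⟨s, _, hs⟩ := intermediate_value_uIcc (f := fun t => K t * (1 - K t))
      (a := t) (b := 0) hcont.continuousOn this
    have hs' : K s * (1 - K s) = 0 := hs
    have := habs s
    rw [hs'] at this
    simp at this
    nlinarith
  intro t
  have h := hpos t
  have hsum : (K t - γ) + ((1 - γ) - K t) = 1 - 2 * γ := by ring
  have hprod : (K t - γ) * ((1 - γ) - K t) ≥ 0 := by nlinarith
  have h1 : γ ≤ K t := by nlinarith
  have h2 : K t ≤ 1 - γ := by nlinarith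
  exact ⟨h1, h2, by linarith, by linarith⟩
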